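/- (Offline-to-online preference variance bound, core of Theorem 2.) Let π₁ and π₂ be probability measures on a measurable space Y, and let r₁, r₂, r* : Y → ℝ be bounded measurable functions. Define p_k(y, y') = σ(r_k(y) − r_k(y')) for k = 1, 2, where σ is the sigmoid function. Then Var_{π₁⊗π₁}(p₁) ≤ Var_{π₂⊗π₂}(p₂) + 2·sup_y |r₁(y) − r*(y)| + 2·sup_y |r₂(y) − r*(y)| + 6·TV(π₁ ⊗ π₁, π₂ ⊗ π₂). -/

import Mathlib

open MeasureTheory
open scoped NNReal ENNReal

/-- The sigmoid function `σ(z) = 1 / (1 + exp (-z))`. -/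
noncomputable def sigmoid (z : ℝ) : ℝ := 1 / (1 + Real.exp (-z))

/-- Variance of a real-valued function: `∫ U² dμ - (∫ U dμ)²`. -/
noncomputable def Var {Ω : Type*} [MeasurableSpace Ω] (μ : Measure Ω) (U : Ω → ℝ) : ℝ :=
  (∫ ω, (U ω) ^ 2 ∂μ) - (∫ ω, U ω ∂μ) ^ 2

/-- Total variation distance: supremum over measurable sets of `|μ A - ν A|`. -/
noncomputable def tvDist {Ω : Type*} [MeasurableSpace Ω] (μ ν : Measure Ω) : ℝ :=
  ⨆ A : {A : Set Ω // MeasurableSet A}, |(μ A.1).toReal - (ν A.1).toReal|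

/-! ### Auxiliary lemmas about the sigmoid function -/

lemma sigmoid_nonneg (z : ℝ) : 0 ≤ sigmoid z := by unfold sigmoid; positivity

lemma sigmoid_le_one (z : ℝ) : sigmoid z ≤ 1 := by
  unfold sigmoid
  rw [div_le_one (by positivity)]
  linarith [Real.exp_pos (-z)]

lemma sigmoid_hasDerivAt (z : ℝ) :
    HasDerivAt sigmoid (Real.exp (-z) / (1 + Real.exp (-z)) ^ 2) z := by
  have h1 : HasDerivAt (fun w : ℝ => -w) (-1) z := (hasDerivAt_id z).neg
  have h2 : HasDerivAt (fun w : ℝ => Real.exp (-w)) (Real.exp (-z) * (-1)) z :=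
    (Real.hasDerivAt_exp (-z)).comp z h1
  have h3 : HasDerivAt (fun w : ℝ => 1 + Real.exp (-w)) (Real.exp (-z) * (-1)) z :=
    h2.const_add 1
  have h4 := h3.inv (by positivity)
  have : sigmoid = fun w => (1 + Real.exp (-w))⁻¹ := by
    funext w; simp [sigmoid, one_div]
  rw [this]
  exact h4.congr_deriv (by ring)

lemma sigmoid_continuous : Continuous sigmoid :=
  Differentiable.continuous (fun z => (sigmoid_hasDerivAt z).differentiableAt)

lemma sq_diff_bound {a b ε : ℝ} (h : |a - b| ≤ ε) (ha0 : 0 ≤ a) (ha1 : a ≤ 1)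
    (hb0 : 0 ≤ b) (hb1 : b ≤ 1) : |a ^ 2 - b ^ 2| ≤ 2 * ε := by
  have hε : 0 ≤ ε := le_trans (abs_nonneg _) h
  rw [abs_le] at h ⊢
  constructor <;>
    nlinarith [mul_nonneg (by linarith : (0:ℝ) ≤ ε - (a - b)) (by linarith : (0:ℝ) ≤ a + b),
      mul_nonneg (by linarith : (0:ℝ) ≤ (a - b) + ε) (by linarith : (0:ℝ) ≤ a + b),
      mul_nonneg hε (by linarith : (0:ℝ) ≤ 2 - (a + b))]

lemma sigmoid_lipschitz (a b : ℝ) : |sigmoid a - sigmoid b| ≤ |a - b| / 4 := by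
  have hdiff : Differentiable ℝ sigmoid := fun z => (sigmoid_hasDerivAt z).differentiableAt
  have hlip : LipschitzWith (4⁻¹ : ℝ≥0) sigmoid := by
    apply lipschitzWith_of_nnnorm_deriv_le hdiff
    intro x
    rw [← NNReal.coe_le_coe, coe_nnnorm, (sigmoid_hasDerivAt x).deriv]
    have hx := Real.exp_pos (-x)
    rw [Real.norm_eq_abs, abs_of_nonneg (by positivity)]
    rw [div_le_iff₀ (by positivity)]
    push_cast
    nlinarith [sq_nonneg (1 - Real.exp (-x))]
  have := hlip.dist_le_mul a b
  rw [Real.dist_eq, Real.dist_eq] at this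
  push_cast at this
  linarith

/-! ### Auxiliary lemmas about integrals and total variation -/

lemma prob_toReal_le_one {Ω : Type*} [MeasurableSpace Ω] (μ : Measure Ω)
    [IsProbabilityMeasure μ] (A : Set Ω) : (μ A).toReal ≤ 1 := by
  have h : μ A ≤ 1 := prob_le_one
  calc (μ A).toReal ≤ (1 : ℝ≥0∞).toReal := ENNReal.toReal_mono ENNReal.one_ne_top h
    _ = 1 := by simp

lemma abs_measure_sub_le_tv {Ω : Type*} [MeasurableSpace Ω] (μ ν : Measure Ω)
    [IsProbabilityMeasure μ] [IsProbabilityMeasure ν] {A : Set Ω} (hA : MeasurableSet A) :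
    |(μ A).toReal - (ν A).toReal| ≤ tvDist μ ν := by
  have hbdd : BddAbove (Set.range fun A : {A : Set Ω // MeasurableSet A} =>
      |(μ A.1).toReal - (ν A.1).toReal|) := by
    refine ⟨1, ?_⟩
    rintro x ⟨B, rfl⟩
    have h1 := prob_toReal_le_one μ B.1
    have h2 := prob_toReal_le_one ν B.1
    have h3 : (0:ℝ) ≤ (μ B.1).toReal := ENNReal.toReal_nonneg
    have h4 : (0:ℝ) ≤ (ν B.1).toReal := ENNReal.toReal_nonneg
    exact abs_le.mpr ⟨by linarith, by linarith⟩
  exact le_ciSup hbdd ⟨A, hA⟩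

lemma tvDist_nonneg' {Ω : Type*} [MeasurableSpace Ω] (μ ν : Measure Ω)
    [IsProbabilityMeasure μ] [IsProbabilityMeasure ν] : 0 ≤ tvDist μ ν := by
  have := abs_measure_sub_le_tv μ ν (A := ∅) MeasurableSet.empty
  simpa using this

lemma integrable_of_bounded' {Ω : Type*} [MeasurableSpace Ω] (μ : Measure Ω)
    [IsFiniteMeasure μ] {f : Ω → ℝ} (hf : AEStronglyMeasurable f μ) {C : ℝ}
    (hC : ∀ x, |f x| ≤ C) : Integrable f μ :=
  ⟨hf, HasFiniteIntegral.of_bounded (C := C)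
    (ae_of_all _ (fun x => by simpa [Real.norm_eq_abs] using hC x))⟩

lemma abs_int {Ω : Type*} [MeasurableSpace Ω] {μ : Measure Ω} (f : Ω → ℝ) :
    |∫ x, f x ∂μ| ≤ ∫ x, |f x| ∂μ := by
  simpa [Real.norm_eq_abs] using norm_integral_le_integral_norm (μ := μ) f

lemma abs_integral_le' {Ω : Type*} [MeasurableSpace Ω] (μ : Measure Ω)
    [IsProbabilityMeasure μ] {f : Ω → ℝ} (hf : Integrable f μ) {C : ℝ}
    (hC : ∀ x, |f x| ≤ C) : |∫ x, f x ∂μ| ≤ C := by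
  calc |∫ x, f x ∂μ| ≤ ∫ x, |f x| ∂μ := abs_int f
    _ ≤ ∫ _x, C ∂μ := integral_mono hf.abs (integrable_const C) (fun x => hC x)
    _ = C := by simp

lemma integral_sub_le_tv {Ω : Type*} [MeasurableSpace Ω] (μ ν : Measure Ω)
    [IsProbabilityMeasure μ] [IsProbabilityMeasure ν] {g : Ω → ℝ} (hg : Measurable g)
    (h0 : ∀ x, 0 ≤ g x) (h1 : ∀ x, g x ≤ 1) :
    |∫ x, g x ∂μ - ∫ x, g x ∂ν| ≤ tvDist μ ν := by
  have habs : ∀ x, |g x| ≤ 1 := fun x => abs_le.mpr ⟨by linarith [h0 x], h1 x⟩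
  have hlayerInt : ∀ (m : Measure Ω), IsProbabilityMeasure m →
      IntegrableOn (fun t : ℝ => (m {a | t < g a}).toReal) (Set.Ioc (0:ℝ) 1) volume := by
    intro m hm
    have hanti : Antitone (fun t : ℝ => (m {a | t < g a}).toReal) := by
      intro s t hst
      exact ENNReal.toReal_mono (measure_ne_top m _)
        (measure_mono (fun a ha => lt_of_le_of_lt hst ha))
    haveI : IsFiniteMeasure (volume.restrict (Set.Ioc (0:ℝ) 1)) := by
      constructor
      rw [Measure.restrict_apply_univ, Real.volume_Ioc]
      simp
    exact integrable_of_bounded' _ (hanti.measurable.aestronglyMeasurable)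
      (C := 1) (fun t => by
        rw [abs_of_nonneg ENNReal.toReal_nonneg]
        exact prob_toReal_le_one m _)
  have key : ∀ (m : Measure Ω), IsProbabilityMeasure m →
      ∫ x, g x ∂m = ∫ t in Set.Ioc (0:ℝ) 1, (m {a | t < g a}).toReal := by
    intro m hm
    haveI := hm
    have hgm : Integrable g m := integrable_of_bounded' m hg.aestronglyMeasurable habs
    rw [hgm.integral_eq_integral_meas_lt (ae_of_all _ h0)]
    simp only [measureReal_def]
    have hzero : ∀ t ∈ Set.Ioi (1:ℝ), (m {a | t < g a}).toReal = 0 := by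
      intro t ht
      have : {a | t < g a} = ∅ := by
        ext a
        simp only [Set.mem_setOf_eq, Set.mem_empty_iff_false, iff_false, not_lt]
        exact le_trans (h1 a) (le_of_lt ht)
      simp [this]
    have hInt2 : IntegrableOn (fun t : ℝ => (m {a | t < g a}).toReal) (Set.Ioi (1:ℝ)) volume := by
      rw [integrableOn_congr_fun hzero measurableSet_Ioi]
      exact integrableOn_zero
    rw [← Set.Ioc_union_Ioi_eq_Ioi (zero_le_one' ℝ),
      setIntegral_union (Set.Ioc_disjoint_Ioi le_rfl) measurableSet_Ioi (hlayerInt m hm) hInt2,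
      setIntegral_eq_zero_of_forall_eq_zero hzero, add_zero]
  rw [key μ ‹_›, key ν ‹_›, ← integral_sub (hlayerInt μ ‹_›) (hlayerInt ν ‹_›)]
  calc |∫ t in Set.Ioc (0:ℝ) 1, ((μ {a | t < g a}).toReal - (ν {a | t < g a}).toReal)|
      ≤ ∫ t in Set.Ioc (0:ℝ) 1, |(μ {a | t < g a}).toReal - (ν {a | t < g a}).toReal| :=
        abs_int _
    _ ≤ ∫ _t in Set.Ioc (0:ℝ) 1, tvDist μ ν := by
        apply integral_mono ((hlayerInt μ ‹_›).sub (hlayerInt ν ‹_›)).abs ((integrableOn_const_iff enorm_ne_top).mpr ?_)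
        · intro t
          exact abs_measure_sub_le_tv μ ν (measurableSet_lt measurable_const hg)
        · right; rw [Real.volume_Ioc]; simp
    _ = tvDist μ ν := by
        rw [setIntegral_const, Real.volume_real_Ioc]
        simp

/-- Offline-to-online preference variance bound (core of Theorem 2). -/
theorem offline_to_online_pvar_bound {Y : Type*} [MeasurableSpace Y]
    (π₁ π₂ : Measure Y) [IsProbabilityMeasure π₁] [IsProbabilityMeasure π₂]
    (r₁ r₂ rstar : Y → ℝ)
    (hr₁ : Measurable r₁) (hr₂ : Measurable r₂) (hrstar : Measurable rstar)
    (hb₁ : ∃ B, ∀ y, |r₁ y| ≤ B) (hb₂ : ∃ B, ∀ y, |r₂ y| ≤ B)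
    (hbstar : ∃ B, ∀ y, |rstar y| ≤ B) :
    Var (π₁.prod π₁) (fun yy => sigmoid (r₁ yy.1 - r₁ yy.2)) ≤
      Var (π₂.prod π₂) (fun yy => sigmoid (r₂ yy.1 - r₂ yy.2)) +
      2 * (⨆ y, |r₁ y - rstar y|) + 2 * (⨆ y, |r₂ y - rstar y|) +
      6 * tvDist (π₁.prod π₁) (π₂.prod π₂) := by
  obtain ⟨B₁, hB₁⟩ := hb₁
  obtain ⟨B₂, hB₂⟩ := hb₂
  obtain ⟨Bs, hBs⟩ := hbstar
  -- Y is nonempty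
  have hY : Nonempty Y := by
    by_contra h
    rw [not_nonempty_iff] at h
    have h1 : π₁ Set.univ = 1 := measure_univ
    rw [Set.univ_eq_empty_iff.mpr h] at h1
    simp at h1
  set μ := π₁.prod π₁ with hμ
  set ν := π₂.prod π₂ with hν
  set p₁ : Y × Y → ℝ := fun yy => sigmoid (r₁ yy.1 - r₁ yy.2) with hp₁
  set p₂ : Y × Y → ℝ := fun yy => sigmoid (r₂ yy.1 - r₂ yy.2) with hp₂
  haveI hμP : IsProbabilityMeasure μ := by rw [hμ]; infer_instance
  haveI hνP : IsProbabilityMeasure ν := by rw [hν]; infer_instance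
  have hσm : Measurable sigmoid := sigmoid_continuous.measurable
  have hp₁m : Measurable p₁ := hσm.comp ((hr₁.comp measurable_fst).sub (hr₁.comp measurable_snd))
  have hp₂m : Measurable p₂ := hσm.comp ((hr₂.comp measurable_fst).sub (hr₂.comp measurable_snd))
  have hp₁0 : ∀ yy, 0 ≤ p₁ yy := fun yy => sigmoid_nonneg _
  have hp₁1 : ∀ yy, p₁ yy ≤ 1 := fun yy => sigmoid_le_one _
  have hp₂0 : ∀ yy, 0 ≤ p₂ yy := fun yy => sigmoid_nonneg _
  have hp₂1 : ∀ yy, p₂ yy ≤ 1 := fun yy => sigmoid_le_one _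
  set D₁ := ⨆ y, |r₁ y - rstar y| with hD₁def
  set D₂ := ⨆ y, |r₂ y - rstar y| with hD₂def
  have hbdd₁ : BddAbove (Set.range fun y => |r₁ y - rstar y|) := by
    refine ⟨B₁ + Bs, ?_⟩
    rintro x ⟨y, rfl⟩
    have := abs_sub_le (r₁ y) 0 (rstar y)
    simp only [sub_zero, zero_sub, abs_neg] at this
    exact this.trans (add_le_add (hB₁ y) (hBs y))
  have hbdd₂ : BddAbove (Set.range fun y => |r₂ y - rstar y|) := by
    refine ⟨B₂ + Bs, ?_⟩
    rintro x ⟨y, rfl⟩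
    have := abs_sub_le (r₂ y) 0 (rstar y)
    simp only [sub_zero, zero_sub, abs_neg] at this
    exact this.trans (add_le_add (hB₂ y) (hBs y))
  have hD₁ : ∀ y, |r₁ y - rstar y| ≤ D₁ := fun y => le_ciSup hbdd₁ y
  have hD₂ : ∀ y, |r₂ y - rstar y| ≤ D₂ := fun y => le_ciSup hbdd₂ y
  -- pointwise closeness of p₁ and p₂
  have hr₁₂ : ∀ y, |r₁ y - r₂ y| ≤ D₁ + D₂ := by
    intro y
    have h := abs_sub_le (r₁ y) (rstar y) (r₂ y)
    have h2 : |rstar y - r₂ y| = |r₂ y - rstar y| := abs_sub_comm _ _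
    linarith [hD₁ y, hD₂ y, h2 ▸ h]
  have hpe : ∀ yy : Y × Y, |p₁ yy - p₂ yy| ≤ (D₁ + D₂) / 2 := by
    intro yy
    have hlip := sigmoid_lipschitz (r₁ yy.1 - r₁ yy.2) (r₂ yy.1 - r₂ yy.2)
    have htri : |(r₁ yy.1 - r₁ yy.2) - (r₂ yy.1 - r₂ yy.2)| ≤
        |r₁ yy.1 - r₂ yy.1| + |r₁ yy.2 - r₂ yy.2| := by
      have := abs_sub (r₁ yy.1 - r₂ yy.1) (r₁ yy.2 - r₂ yy.2)
      calc |(r₁ yy.1 - r₁ yy.2) - (r₂ yy.1 - r₂ yy.2)|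
          = |(r₁ yy.1 - r₂ yy.1) - (r₁ yy.2 - r₂ yy.2)| := by ring_nf
        _ ≤ |r₁ yy.1 - r₂ yy.1| + |r₁ yy.2 - r₂ yy.2| := abs_sub _ _
    have h1 := hr₁₂ yy.1
    have h2 := hr₁₂ yy.2
    simp only [hp₁, hp₂]
    linarith
  -- integrability
  have hint : ∀ (m : Measure (Y × Y)), IsProbabilityMeasure m → ∀ (f : Y × Y → ℝ),
      Measurable f → (∀ x, 0 ≤ f x) → (∀ x, f x ≤ 1) → Integrable f m := by
    intro m hm f hf h0 h1
    haveI := hm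
    exact integrable_of_bounded' m hf.aestronglyMeasurable (C := 1)
      (fun x => abs_le.mpr ⟨by linarith [h0 x], h1 x⟩)
  have hip₁μ : Integrable p₁ μ := hint μ ‹_› p₁ hp₁m hp₁0 hp₁1
  have hip₂μ : Integrable p₂ μ := hint μ ‹_› p₂ hp₂m hp₂0 hp₂1
  have hip₂ν : Integrable p₂ ν := hint ν ‹_› p₂ hp₂m hp₂0 hp₂1
  have hsq : ∀ f : Y × Y → ℝ, Measurable f → (∀ x, 0 ≤ f x) → (∀ x, f x ≤ 1) →
      Measurable (fun x => f x ^ 2) ∧ (∀ x, 0 ≤ f x ^ 2) ∧ (∀ x, f x ^ 2 ≤ 1) := by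
    intro f hf h0 h1
    refine ⟨hf.pow_const 2, fun x => sq_nonneg _, fun x => ?_⟩
    nlinarith [h0 x, h1 x]
  obtain ⟨hq₁m, hq₁0, hq₁1⟩ := hsq p₁ hp₁m hp₁0 hp₁1
  obtain ⟨hq₂m, hq₂0, hq₂1⟩ := hsq p₂ hp₂m hp₂0 hp₂1
  have hiq₁μ : Integrable (fun x => p₁ x ^ 2) μ := hint μ ‹_› _ hq₁m hq₁0 hq₁1
  have hiq₂μ : Integrable (fun x => p₂ x ^ 2) μ := hint μ ‹_› _ hq₂m hq₂0 hq₂1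
  have hiq₂ν : Integrable (fun x => p₂ x ^ 2) ν := hint ν ‹_› _ hq₂m hq₂0 hq₂1
  -- nonnegativity of D₁ D₂
  obtain ⟨y₀⟩ := hY
  have hD₁0 : 0 ≤ D₁ := le_trans (abs_nonneg _) (hD₁ y₀)
  have hD₂0 : 0 ≤ D₂ := le_trans (abs_nonneg _) (hD₂ y₀)
  -- Step 1: Var μ p₁ ≤ Var μ p₂ + 2 D₁ + 2 D₂
  have step1 : Var μ p₁ ≤ Var μ p₂ + 2 * D₁ + 2 * D₂ := by
    have hJ : |(∫ x, p₁ x ^ 2 ∂μ) - ∫ x, p₂ x ^ 2 ∂μ| ≤ 2 * ((D₁ + D₂) / 2) := by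
      rw [← integral_sub hiq₁μ hiq₂μ]
      apply abs_integral_le' μ (hiq₁μ.sub hiq₂μ)
      intro x
      simp only [Pi.sub_apply]
      exact sq_diff_bound (hpe x) (hp₁0 x) (hp₁1 x) (hp₂0 x) (hp₂1 x)
    have hI : |(∫ x, p₁ x ∂μ) - ∫ x, p₂ x ∂μ| ≤ (D₁ + D₂) / 2 := by
      rw [← integral_sub hip₁μ hip₂μ]
      exact abs_integral_le' μ (hip₁μ.sub hip₂μ) (fun x => by
        simpa [Pi.sub_apply] using hpe x)
    have hI1 : |∫ x, p₁ x ∂μ| ≤ 1 :=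
      abs_integral_le' μ hip₁μ (fun x => abs_le.mpr ⟨by linarith [hp₁0 x], hp₁1 x⟩)
    have hI2 : |∫ x, p₂ x ∂μ| ≤ 1 :=
      abs_integral_le' μ hip₂μ (fun x => abs_le.mpr ⟨by linarith [hp₂0 x], hp₂1 x⟩)
    rw [abs_le] at hJ hI hI1 hI2
    unfold Var
    nlinarith [hJ.1, hJ.2, hI.1, hI.2, hI1.1, hI1.2, hI2.1, hI2.2]
  -- Step 2: Var μ p₂ ≤ Var ν p₂ + 3 * tvDist μ ν
  have step2 : Var μ p₂ ≤ Var ν p₂ + 3 * tvDist μ ν := by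
    have hK : |(∫ x, p₂ x ^ 2 ∂μ) - ∫ x, p₂ x ^ 2 ∂ν| ≤ tvDist μ ν :=
      integral_sub_le_tv μ ν hq₂m hq₂0 hq₂1
    have hL : |(∫ x, p₂ x ∂μ) - ∫ x, p₂ x ∂ν| ≤ tvDist μ ν :=
      integral_sub_le_tv μ ν hp₂m hp₂0 hp₂1
    have hL1 : |∫ x, p₂ x ∂μ| ≤ 1 :=
      abs_integral_le' μ hip₂μ (fun x => abs_le.mpr ⟨by linarith [hp₂0 x], hp₂1 x⟩)
    have hL2 : |∫ x, p₂ x ∂ν| ≤ 1 :=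
      abs_integral_le' ν hip₂ν (fun x => abs_le.mpr ⟨by linarith [hp₂0 x], hp₂1 x⟩)
    rw [abs_le] at hK hL hL1 hL2
    unfold Var
    nlinarith [hK.1, hK.2, hL.1, hL.2, hL1.1, hL1.2, hL2.1, hL2.2]
  have htv0 : 0 ≤ tvDist μ ν := tvDist_nonneg' μ ν
  calc Var μ p₁ ≤ Var μ p₂ + 2 * D₁ + 2 * D₂ := step1
    _ ≤ (Var ν p₂ + 3 * tvDist μ ν) + 2 * D₁ + 2 * D₂ := by linarith
    _ ≤ Var ν p₂ + 2 * D₁ + 2 * D₂ + 6 * tvDist μ ν := by linarith
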